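/- If G is invertible and ‖I − G^{-1} A G^{-T}‖ ≤ ε < 1 (spectral norm), then A is invertible, and the relative inverse error satisfies ‖A^{-1} − F^{-1}‖ ≤ ε/(1−ε) · ‖A^{-1}‖ where F = G G^T. -/

import Mathlib

open Matrix
open scoped Matrix.Norms.L2Operator

/-- A small solve error implies invertibility of `A` and a relative
bound on the inverse approximation error of `F = GGᵀ`. -/
theorem stmt_19 {N : ℕ}
    (A G : Matrix (Fin N) (Fin N) ℝ)
    (hA : A.IsSymm) (hG : IsUnit G)
    (ε : ℝ) (hε0 : 0 ≤ ε) (hε1 : ε < 1)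
    (h : ‖1 - G⁻¹ * A * (G⁻¹)ᵀ‖ ≤ ε) :
    IsUnit A ∧ ‖A⁻¹ - (G * Gᵀ)⁻¹‖ ≤ ε / (1 - ε) * ‖A⁻¹‖ := by
  classical
  set M : Matrix (Fin N) (Fin N) ℝ := G⁻¹ * A * (G⁻¹)ᵀ with hMdef
  set E : Matrix (Fin N) (Fin N) ℝ := 1 - M with hEdef
  have hElt : ‖E‖ < 1 := lt_of_le_of_lt h hε1
  -- M is a unit
  have hMunit : IsUnit M := by
    have := (Units.oneSub E hElt).isUnit
    simpa [hEdef, sub_sub_cancel] using this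
  have hGd : IsUnit G.det := (Matrix.isUnit_iff_isUnit_det G).mp hG
  have hGG : G * G⁻¹ = 1 := Matrix.mul_nonsing_inv G hGd
  have hGG' : G⁻¹ * G = 1 := Matrix.nonsing_inv_mul G hGd
  have hGTu : IsUnit Gᵀ := (Matrix.isUnit_transpose G).mpr hG
  have hTT : (G⁻¹)ᵀ * Gᵀ = 1 := by
    rw [← Matrix.transpose_mul, hGG, Matrix.transpose_one]
  have hTT' : Gᵀ * (G⁻¹)ᵀ = 1 := by
    rw [← Matrix.transpose_mul, hGG', Matrix.transpose_one]
  have hAeq : A = G * M * Gᵀ := by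
    rw [hMdef]
    calc A = (G * G⁻¹) * A * ((G⁻¹)ᵀ * Gᵀ) := by rw [hGG, hTT, Matrix.one_mul, Matrix.mul_one]
    _ = G * (G⁻¹ * A * (G⁻¹)ᵀ) * Gᵀ := by noncomm_ring
  have hAunit : IsUnit A := by rw [hAeq]; exact (hG.mul hMunit).mul hGTu
  refine ⟨hAunit, ?_⟩
  -- inverses
  have hMM : M * M⁻¹ = 1 := Matrix.mul_nonsing_inv M ((Matrix.isUnit_iff_isUnit_det M).mp hMunit)
  have hMM' : M⁻¹ * M = 1 := Matrix.nonsing_inv_mul M ((Matrix.isUnit_iff_isUnit_det M).mp hMunit)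
  have hAinv : A⁻¹ = (G⁻¹)ᵀ * M⁻¹ * G⁻¹ := by
    rw [hAeq, Matrix.mul_inv_rev, Matrix.mul_inv_rev, ← Matrix.transpose_nonsing_inv,
      Matrix.mul_assoc]
  have hFinv : (G * Gᵀ)⁻¹ = (G⁻¹)ᵀ * G⁻¹ := by
    rw [Matrix.mul_inv_rev, ← Matrix.transpose_nonsing_inv]
  -- M is symmetric, positive definite
  have hMsymm : M.IsHermitian := by
    rw [Matrix.IsHermitian, Matrix.conjTranspose_eq_transpose_of_trivial, hMdef,
      Matrix.transpose_mul, Matrix.transpose_mul, Matrix.transpose_transpose, hA.eq,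
      Matrix.mul_assoc]
  have hMpd : M.PosDef := by
    refine Matrix.PosDef.of_dotProduct_mulVec_pos hMsymm fun x hx => ?_
    have hx' : (EuclideanSpace.equiv (Fin N) ℝ).symm x ≠ 0 := by
      simpa using hx
    set y : EuclideanSpace ℝ (Fin N) := (EuclideanSpace.equiv (Fin N) ℝ).symm x with hy
    have hyx : (WithLp.equiv 2 (Fin N → ℝ)) y = x := rfl
    have hEx : ‖(EuclideanSpace.equiv (Fin N) ℝ).symm (E *ᵥ x)‖ ≤ ‖E‖ * ‖y‖ :=
      E.l2_opNorm_mulVec y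
    have hinner : dotProduct x (E *ᵥ x) =
        inner ℝ y ((EuclideanSpace.equiv (Fin N) ℝ).symm (E *ᵥ x)) := by
      rw [EuclideanSpace.inner_eq_star_dotProduct, dotProduct_comm]
      rfl
    have habs : |dotProduct x (E *ᵥ x)| ≤ ‖E‖ * ‖y‖ * ‖y‖ := by
      rw [hinner]
      calc |inner ℝ y ((EuclideanSpace.equiv (Fin N) ℝ).symm (E *ᵥ x))|
          ≤ ‖y‖ * ‖(EuclideanSpace.equiv (Fin N) ℝ).symm (E *ᵥ x)‖ := abs_real_inner_le_norm _ _
        _ ≤ ‖y‖ * (‖E‖ * ‖y‖) := by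
            exact mul_le_mul_of_nonneg_left hEx (norm_nonneg _)
        _ = ‖E‖ * ‖y‖ * ‖y‖ := by ring
    have hself : dotProduct x x = ‖y‖ * ‖y‖ := by
      have := real_inner_self_eq_norm_mul_norm y
      rw [EuclideanSpace.inner_eq_star_dotProduct] at this
      simpa [hy] using this
    have hMx : M *ᵥ x = x - E *ᵥ x := by
      have : M = 1 - E := by rw [hEdef, sub_sub_cancel]
      rw [this, Matrix.sub_mulVec, Matrix.one_mulVec]
    have hy0 : 0 < ‖y‖ := norm_pos_iff.mpr hx'
    have hE0 : ‖E‖ < 1 := hElt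
    rw [star_trivial, hMx, dotProduct_sub, hself]
    have : |dotProduct x (E *ᵥ x)| < ‖y‖ * ‖y‖ := by
      refine lt_of_le_of_lt habs ?_
      have := mul_lt_mul_of_pos_right (mul_lt_mul_of_pos_right hE0 hy0) hy0
      simpa using this
    cases abs_lt.mp this with
    | intro h1 h2 => linarith
  have hMinvPsd : (M⁻¹).PosSemidef := hMpd.inv.posSemidef
  set S : Matrix (Fin N) (Fin N) ℝ := (by open scoped MatrixOrder in exact CFC.sqrt (M⁻¹)) with hSdef
  have hSS : S * S = M⁻¹ := by open scoped MatrixOrder in exact CFC.sqrt_mul_sqrt_self _ hMinvPsd.nonneg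
  have hSh : S.IsHermitian := by open scoped MatrixOrder in exact (CFC.sqrt_nonneg (M⁻¹)).posSemidef.1
  have hSt : Sᵀ = S := by
    rw [← Matrix.conjTranspose_eq_transpose_of_trivial]; exact hSh
  -- commutation
  have hSMinv : S * M⁻¹ = M⁻¹ * S := by rw [← hSS, Matrix.mul_assoc]
  have hSM : S * M = M * S := by
    calc S * M = (M * M⁻¹) * (S * M) := by rw [hMM, Matrix.one_mul]
      _ = M * (M⁻¹ * S) * M := by noncomm_ring
      _ = M * (S * M⁻¹) * M := by rw [hSMinv]
      _ = (M * S) * (M⁻¹ * M) := by noncomm_ring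
      _ = M * S := by rw [hMM', Matrix.mul_one]
  have hSE : S * E = E * S := by
    rw [hEdef]
    simp only [Matrix.sub_mul, Matrix.mul_sub, Matrix.mul_one, Matrix.one_mul, hSM]
  set Y : Matrix (Fin N) (Fin N) ℝ := (G⁻¹)ᵀ * S with hYdef
  have hYt : Yᵀ = S * G⁻¹ := by rw [hYdef, Matrix.transpose_mul, hSt, Matrix.transpose_transpose]
  have hAinvY : A⁻¹ = Y * Yᵀ := by
    rw [hAinv, hYdef, hYt]
    calc (G⁻¹)ᵀ * M⁻¹ * G⁻¹ = (G⁻¹)ᵀ * (S * S) * G⁻¹ := by rw [hSS]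
      _ = (G⁻¹)ᵀ * S * (S * G⁻¹) := by noncomm_ring
  have hdiff : A⁻¹ - (G * Gᵀ)⁻¹ = Y * E * Yᵀ := by
    have hMinvE : M⁻¹ - 1 = M⁻¹ * E := by
      rw [hEdef, Matrix.mul_sub, Matrix.mul_one, hMM']
    have hSES : S * E * S = M⁻¹ * E := by
      calc S * E * S = E * S * S := by rw [hSE]
        _ = E * (S * S) := by rw [Matrix.mul_assoc]
        _ = E * M⁻¹ := by rw [hSS]
        _ = M⁻¹ * E := by
            rw [hEdef]
            simp only [Matrix.sub_mul, Matrix.mul_sub, Matrix.mul_one, Matrix.one_mul, hMM, hMM']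
    calc A⁻¹ - (G * Gᵀ)⁻¹ = (G⁻¹)ᵀ * M⁻¹ * G⁻¹ - (G⁻¹)ᵀ * G⁻¹ := by rw [hAinv, hFinv]
      _ = (G⁻¹)ᵀ * (M⁻¹ - 1) * G⁻¹ := by noncomm_ring
      _ = (G⁻¹)ᵀ * (S * E * S) * G⁻¹ := by rw [hMinvE, hSES]
      _ = Y * E * Yᵀ := by rw [hYdef, hYt]; noncomm_ring
  -- norm computations
  have hYtn : ‖Yᵀ‖ = ‖Y‖ := by
    have := Y.l2_opNorm_conjTranspose
    rwa [Matrix.conjTranspose_eq_transpose_of_trivial] at this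
  have hAinvn : ‖A⁻¹‖ = ‖Y‖ * ‖Y‖ := by
    have := Yᵀ.l2_opNorm_conjTranspose_mul_self
    rw [Matrix.conjTranspose_eq_transpose_of_trivial, Matrix.transpose_transpose, hYtn] at this
    rw [hAinvY, this]
  have hbound : ‖A⁻¹ - (G * Gᵀ)⁻¹‖ ≤ ε * ‖A⁻¹‖ := by
    rw [hdiff, hAinvn]
    calc ‖Y * E * Yᵀ‖ ≤ ‖Y * E‖ * ‖Yᵀ‖ := Matrix.l2_opNorm_mul _ _
      _ ≤ ‖Y‖ * ‖E‖ * ‖Yᵀ‖ := by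
          exact mul_le_mul_of_nonneg_right (Matrix.l2_opNorm_mul _ _) (norm_nonneg _)
      _ ≤ ‖Y‖ * ε * ‖Y‖ := by
          rw [hYtn]
          exact mul_le_mul_of_nonneg_right
            (mul_le_mul_of_nonneg_left h (norm_nonneg _)) (norm_nonneg _)
      _ = ε * (‖Y‖ * ‖Y‖) := by ring
  have hεle : ε ≤ ε / (1 - ε) := by
    rw [le_div_iff₀ (by linarith)]
    nlinarith
  calc ‖A⁻¹ - (G * Gᵀ)⁻¹‖ ≤ ε * ‖A⁻¹‖ := hbound
    _ ≤ ε / (1 - ε) * ‖A⁻¹‖ := mul_le_mul_of_nonneg_right hεle (norm_nonneg _)
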